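/- Let 1 ≤ p < ∞ and suppose sup_{x,y∈U_i} m_w(x,y) ≤ C_m for all i ∈ I, where m_w(x,y) = max(w(x)/w(y), w(y)/w(x)). Then there exist constants 0 < c ≤ C < ∞, depending only on N, C_m and p, such that for every sequence (λ_i)_{i∈I} of complex numbers (with both sides possibly infinite): c (Σ_{i∈I} |λ_i|^p d_p(i)^p)^{1/p} ≤ ( ∫_X (Σ_{i∈I} |λ_i| μ(U_i)^{-1} χ_{U_i}(y))^p w(y)^p dμ(y) )^{1/p} ≤ C (Σ_{i∈I} |λ_i|^p d_p(i)^p)^{1/p}, where d_p(i) = μ(U_i)^{1/p − 1} w̃(i) and w̃(i) = sup_{x∈U_i} w(x). (Theorem 5.2(c), natural sequence space: (L^p_w)^♮ = ℓ^p_{d_p} with equivalent norms.) -/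

import Mathlib

open MeasureTheory
open scoped ENNReal NNReal

lemma aux_tsum_rpow_le {ι : Type*} (f : ι → ℝ≥0∞) {p : ℝ} (hp : 1 ≤ p) :
    ∑' i, f i ^ p ≤ (∑' i, f i) ^ p := by
  have h0 : (0:ℝ) < p := lt_of_lt_of_le one_pos hp
  set T := ∑' i, f i with hT
  rcases eq_or_ne T ∞ with h | h
  · rw [h, ENNReal.top_rpow_of_pos h0]; exact le_top
  rcases eq_or_ne T 0 with h0T | h0T
  · have hf : ∀ i, f i = 0 := ENNReal.tsum_eq_zero.mp h0T
    simp [hf, ENNReal.zero_rpow_of_pos h0]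
  · calc ∑' i, f i ^ p ≤ ∑' i, T ^ (p-1) * f i := by
          refine ENNReal.tsum_le_tsum fun i => ?_
          rcases eq_or_ne (f i) 0 with hf | hf
          · simp [hf, ENNReal.zero_rpow_of_pos h0]
          · have hfT : f i ≠ ∞ := ne_top_of_le_ne_top h (ENNReal.le_tsum i)
            have h1 : f i ^ p = f i ^ (p-1) * f i ^ (1:ℝ) := by
              rw [← ENNReal.rpow_add _ _ hf hfT]; norm_num
            rw [h1, ENNReal.rpow_one]
            exact mul_le_mul_left (ENNReal.rpow_le_rpow (ENNReal.le_tsum i) (by linarith)) _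
      _ = T ^ (p-1) * T := by rw [ENNReal.tsum_mul_left]
      _ = T ^ p := by
          have h1 : T ^ (p-1) * T ^ (1:ℝ) = T ^ p := by
            rw [← ENNReal.rpow_add _ _ h0T h]; norm_num
          rw [← h1, ENNReal.rpow_one]

lemma aux_rpow_tsum_le {ι : Type*} (f : ι → ℝ≥0∞) {p : ℝ} (hp : 1 ≤ p) (N : ℕ)
    (hsupp : (Function.support f).Finite) (hcard : hsupp.toFinset.card ≤ N) :
    (∑' i, f i) ^ p ≤ (N : ℝ≥0∞) ^ p * ∑' i, f i ^ p := by
  have h0 : (0:ℝ) < p := lt_of_lt_of_le one_pos hp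
  set s := hsupp.toFinset with hs
  have hsum : ∑' i, f i = ∑ i ∈ s, f i := by
    refine tsum_eq_sum fun i hi => ?_
    exact Function.notMem_support.mp (by simpa [hs] using hi)
  set M := (∑ i ∈ s, f i ^ p) ^ (1/p) with hM
  have hMp : M ^ p = ∑ i ∈ s, f i ^ p := by
    rw [hM, ← ENNReal.rpow_mul, one_div, inv_mul_cancel₀ h0.ne', ENNReal.rpow_one]
  have hle : ∀ i ∈ s, f i ≤ M := by
    intro i hi
    have h1 : f i = (f i ^ p) ^ (1/p) := by
      rw [← ENNReal.rpow_mul, mul_one_div, div_self h0.ne', ENNReal.rpow_one]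
    rw [h1, hM]
    exact ENNReal.rpow_le_rpow
      (Finset.single_le_sum (f := fun i => f i ^ p) (fun _ _ => zero_le) hi)
      (by positivity)
  have hsle : ∑ i ∈ s, f i ≤ (s.card : ℝ≥0∞) * M := by
    calc ∑ i ∈ s, f i ≤ s.card • M := Finset.sum_le_card_nsmul s f M hle
    _ = (s.card : ℝ≥0∞) * M := nsmul_eq_mul _ _
  calc (∑' i, f i) ^ p = (∑ i ∈ s, f i) ^ p := by rw [hsum]
    _ ≤ ((s.card : ℝ≥0∞) * M) ^ p := ENNReal.rpow_le_rpow hsle h0.le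
    _ ≤ ((N : ℝ≥0∞) * M) ^ p :=
        ENNReal.rpow_le_rpow (mul_le_mul_left (by exact_mod_cast hcard) M) h0.le
    _ = (N : ℝ≥0∞) ^ p * M ^ p := ENNReal.mul_rpow_of_nonneg _ _ h0.le
    _ ≤ (N : ℝ≥0∞) ^ p * ∑' i, f i ^ p := by
        rw [hMp]; exact mul_le_mul_right (ENNReal.sum_le_tsum s) _

/-- **Theorem 5.2(c), natural sequence space.** `(L^p_w)^♮ = ℓ^p_{d_p}` with equivalent
norms, where `d_p(i) = μ(U_i)^{1/p - 1} w̃(i)` and `w̃(i) = sup_{x ∈ U_i} w(x)`. -/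
theorem stmt_3
    {X : Type*} [MeasurableSpace X] (μ : Measure X)
    {I : Type*} [Countable I] (U : I → Set X)
    (hUmeas : ∀ i, MeasurableSet (U i))
    (hUpos : ∀ i, 0 < μ (U i)) (hUfin : ∀ i, μ (U i) < ∞)
    (hcov : ∀ x : X, ∃ i, x ∈ U i)
    (N : ℕ) (hN : ∀ x : X, {i : I | x ∈ U i}.encard ≤ N)
    (w : X → ℝ) (hw : ∀ x, 0 < w x) (hwm : Measurable w)
    (p : ℝ) (hp : 1 ≤ p)
    (Cm : ℝ) (hCm : ∀ i, ∀ x ∈ U i, ∀ y ∈ U i, max (w x / w y) (w y / w x) ≤ Cm) :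
    ∃ c C : ℝ≥0∞, 0 < c ∧ c ≤ C ∧ C < ∞ ∧ ∀ lam : I → ℂ,
      c * (∑' i, (‖lam i‖₊ : ℝ≥0∞) ^ p
            * (μ (U i) ^ (1/p - 1) * ⨆ x ∈ U i, ENNReal.ofReal (w x)) ^ p) ^ (1/p)
        ≤ (∫⁻ y, (∑' i, (‖lam i‖₊ : ℝ≥0∞) * (μ (U i))⁻¹
              * (U i).indicator (fun _ => (1 : ℝ≥0∞)) y) ^ p
            * ENNReal.ofReal (w y) ^ p ∂μ) ^ (1/p)
      ∧ (∫⁻ y, (∑' i, (‖lam i‖₊ : ℝ≥0∞) * (μ (U i))⁻¹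
              * (U i).indicator (fun _ => (1 : ℝ≥0∞)) y) ^ p
            * ENNReal.ofReal (w y) ^ p ∂μ) ^ (1/p)
        ≤ C * (∑' i, (‖lam i‖₊ : ℝ≥0∞) ^ p
            * (μ (U i) ^ (1/p - 1) * ⨆ x ∈ U i, ENNReal.ofReal (w x)) ^ p) ^ (1/p) := by
  have h0 : (0:ℝ) < p := lt_of_lt_of_le one_pos hp
  set Cm' : ℝ≥0∞ := ENNReal.ofReal Cm with hCm'
  refine ⟨Cm'⁻¹ ⊓ 1, (N : ℝ≥0∞) + 1, ?_, ?_, ?_, ?_⟩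
  · exact lt_min (ENNReal.inv_pos.mpr ENNReal.ofReal_ne_top) one_pos
  · exact le_trans inf_le_right (by simp)
  · exact (ENNReal.add_lt_top).mpr ⟨by simp, by simp⟩
  intro lam
  -- notation
  set w' : X → ℝ≥0∞ := fun y => ENNReal.ofReal (w y) with hw'def
  set ws : I → ℝ≥0∞ := fun i => ⨆ x ∈ U i, ENNReal.ofReal (w x) with hwsdef
  set c : I → ℝ≥0∞ := fun i => (‖lam i‖₊ : ℝ≥0∞) * (μ (U i))⁻¹ with hcdef
  set J : I → ℝ≥0∞ := fun i => ∫⁻ y in U i, w' y ^ p ∂μ with hJdef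
  have hμ0 : ∀ i, μ (U i) ≠ 0 := fun i => (hUpos i).ne'
  have hμt : ∀ i, μ (U i) ≠ ∞ := fun i => (hUfin i).ne
  have hUne : ∀ i, (U i).Nonempty := fun i => nonempty_of_measure_ne_zero (hμ0 i)
  have hw'm : Measurable w' := hwm.ennreal_ofReal
  have hpt_pow : ∀ (i : I) (y : X),
      (c i * (U i).indicator (fun _ => (1:ℝ≥0∞)) y) ^ p
        = c i ^ p * (U i).indicator (fun _ => (1:ℝ≥0∞)) y := by
    intro i y
    by_cases hy : y ∈ U i
    · simp [Set.indicator_of_mem hy]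
    · simp [Set.indicator_of_notMem hy, ENNReal.zero_rpow_of_pos h0]
  have hg : ∀ i : I, Measurable (fun y =>
      c i ^ p * (U i).indicator (fun _ => (1:ℝ≥0∞)) y * w' y ^ p) := fun i =>
    ((measurable_one.indicator (hUmeas i)).const_mul _).mul (hw'm.pow_const p)
  -- each term's integral
  have hterm : ∀ i : I,
      ∫⁻ y, c i ^ p * (U i).indicator (fun _ => (1:ℝ≥0∞)) y * w' y ^ p ∂μ
        = c i ^ p * J i := by
    intro i
    have heq : ∀ y, c i ^ p * (U i).indicator (fun _ => (1:ℝ≥0∞)) y * w' y ^ p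
        = (U i).indicator (fun y => c i ^ p * w' y ^ p) y := by
      intro y
      by_cases hy : y ∈ U i
      · simp [Set.indicator_of_mem hy]
      · simp [Set.indicator_of_notMem hy]
    simp_rw [heq]
    rw [lintegral_indicator (hUmeas i), hJdef,
      lintegral_const_mul _ (hw'm.pow_const p)]
  have hswap : ∫⁻ y, (∑' i, c i ^ p * (U i).indicator (fun _ => (1:ℝ≥0∞)) y * w' y ^ p) ∂μ
      = ∑' i, c i ^ p * J i := by
    rw [lintegral_tsum (fun i => (hg i).aemeasurable)]
    exact tsum_congr hterm
  -- bounds on J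
  have hJup : ∀ i, J i ≤ ws i ^ p * μ (U i) := by
    intro i
    calc J i ≤ ∫⁻ _ in U i, ws i ^ p ∂μ := by
          refine setLIntegral_mono measurable_const fun y hy => ?_
          exact ENNReal.rpow_le_rpow (le_biSup _ hy) h0.le
      _ = ws i ^ p * μ (U i) := setLIntegral_const _ _
  have hJlo : ∀ i, ws i ^ p * μ (U i) ≤ Cm' ^ p * J i := by
    intro i
    obtain ⟨y, hy⟩ := hUne i
    have hCm1 : (1:ℝ) ≤ Cm := by
      have := hCm i y hy y hy
      simpa [div_self (hw y).ne'] using this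
    have hCm'0 : Cm' ≠ 0 := by
      rw [hCm']; exact (ENNReal.ofReal_pos.mpr (by linarith)).ne'
    have hws : ∀ z ∈ U i, ws i ≤ Cm' * w' z := by
      intro z hz
      refine iSup₂_le fun x hx => ?_
      have hx' : w x ≤ Cm * w z := by
        have h1 : w x / w z ≤ Cm := le_trans (le_max_left _ _) (hCm i x hx z hz)
        exact (div_le_iff₀ (hw z)).mp h1
      calc ENNReal.ofReal (w x) ≤ ENNReal.ofReal (Cm * w z) := ENNReal.ofReal_le_ofReal hx'
        _ = Cm' * w' z := ENNReal.ofReal_mul (by linarith)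
    have hK : ∀ z ∈ U i, Cm'⁻¹ ^ p * ws i ^ p ≤ w' z ^ p := by
      intro z hz
      have h2 : Cm'⁻¹ * ws i ≤ w' z := by
        calc Cm'⁻¹ * ws i ≤ Cm'⁻¹ * (Cm' * w' z) := mul_le_mul_right (hws z hz) _
          _ = (Cm'⁻¹ * Cm') * w' z := (mul_assoc _ _ _).symm
          _ ≤ 1 * w' z := mul_le_mul_left (ENNReal.inv_mul_le_one _) _
          _ = w' z := one_mul _
      calc Cm'⁻¹ ^ p * ws i ^ p = (Cm'⁻¹ * ws i) ^ p :=
            (ENNReal.mul_rpow_of_nonneg _ _ h0.le).symm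
        _ ≤ w' z ^ p := ENNReal.rpow_le_rpow h2 h0.le
    have hKJ : Cm'⁻¹ ^ p * ws i ^ p * μ (U i) ≤ J i := by
      calc Cm'⁻¹ ^ p * ws i ^ p * μ (U i)
          = ∫⁻ _ in U i, Cm'⁻¹ ^ p * ws i ^ p ∂μ := (setLIntegral_const _ _).symm
        _ ≤ J i := setLIntegral_mono (hw'm.pow_const p) hK
    have hcc : Cm' ^ p * Cm'⁻¹ ^ p = 1 := by
      rw [← ENNReal.mul_rpow_of_nonneg _ _ h0.le,
        ENNReal.mul_inv_cancel hCm'0 ENNReal.ofReal_ne_top, ENNReal.one_rpow]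
    calc ws i ^ p * μ (U i) = Cm' ^ p * (Cm'⁻¹ ^ p * ws i ^ p * μ (U i)) := by
          rw [← mul_assoc, ← mul_assoc, hcc, one_mul]
      _ ≤ Cm' ^ p * J i := mul_le_mul_right hKJ _
  -- algebra identity
  have halg : ∀ i, c i ^ p * (ws i ^ p * μ (U i))
      = (‖lam i‖₊ : ℝ≥0∞) ^ p * (μ (U i) ^ (1/p - 1) * ws i) ^ p := by
    intro i
    have hμalg : ((μ (U i))⁻¹) ^ p * μ (U i) = (μ (U i) ^ (1/p - 1)) ^ p := by
      calc ((μ (U i))⁻¹) ^ p * μ (U i)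
          = μ (U i) ^ ((-1:ℝ) * p) * μ (U i) ^ (1:ℝ) := by
            rw [ENNReal.rpow_one, ENNReal.rpow_mul, ENNReal.rpow_neg_one]
        _ = μ (U i) ^ ((-1:ℝ) * p + 1) := (ENNReal.rpow_add _ _ (hμ0 i) (hμt i)).symm
        _ = (μ (U i) ^ (1/p - 1)) ^ p := by
            rw [← ENNReal.rpow_mul]
            congr 1
            field_simp
            ring
    rw [hcdef]
    rw [ENNReal.mul_rpow_of_nonneg _ _ h0.le, ENNReal.mul_rpow_of_nonneg _ _ h0.le]
    calc (‖lam i‖₊ : ℝ≥0∞) ^ p * ((μ (U i))⁻¹) ^ p * (ws i ^ p * μ (U i))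
        = (‖lam i‖₊ : ℝ≥0∞) ^ p * ((((μ (U i))⁻¹) ^ p * μ (U i)) * ws i ^ p) := by ring
      _ = (‖lam i‖₊ : ℝ≥0∞) ^ p * ((μ (U i) ^ (1/p - 1)) ^ p * ws i ^ p) := by rw [hμalg]
  -- set S and Int
  set S : ℝ≥0∞ := ∑' i, (‖lam i‖₊ : ℝ≥0∞) ^ p * (μ (U i) ^ (1/p - 1) * ws i) ^ p with hSdef
  set Int : ℝ≥0∞ := ∫⁻ y, (∑' i, c i * (U i).indicator (fun _ => (1:ℝ≥0∞)) y) ^ p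
      * w' y ^ p ∂μ with hIntdef
  -- pointwise rewriting of the sum of b's
  have hbsum : ∀ y, (∑' i, c i ^ p * (U i).indicator (fun _ => (1:ℝ≥0∞)) y) * w' y ^ p
      = ∑' i, c i ^ p * (U i).indicator (fun _ => (1:ℝ≥0∞)) y * w' y ^ p := by
    intro y; rw [ENNReal.tsum_mul_right]
  -- upper bound : Int ≤ N^p * S
  have hup : Int ≤ (N : ℝ≥0∞) ^ p * S := by
    have hpt : ∀ y, (∑' i, c i * (U i).indicator (fun _ => (1:ℝ≥0∞)) y) ^ p * w' y ^ p
        ≤ (N : ℝ≥0∞) ^ p * ((∑' i, c i ^ p * (U i).indicator (fun _ => (1:ℝ≥0∞)) y)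
            * w' y ^ p) := by
      intro y
      have htfin : ({i : I | y ∈ U i}).Finite := Set.finite_of_encard_le_coe (hN y)
      have hsub : Function.support (fun i => c i * (U i).indicator (fun _ => (1:ℝ≥0∞)) y)
          ⊆ {i : I | y ∈ U i} := by
        intro i hi
        by_contra h
        exact hi (by
          show c i * (U i).indicator (fun _ => (1:ℝ≥0∞)) y = 0
          rw [Set.indicator_of_notMem (by exact h), mul_zero])
      have hfin := htfin.subset hsub
      have hcard : hfin.toFinset.card ≤ N := by
        have h1 : hfin.toFinset.card ≤ htfin.toFinset.card :=
          Finset.card_le_card (Set.Finite.toFinset_subset_toFinset.mpr hsub)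
        have h2 : (htfin.toFinset.card : ℕ∞) ≤ N := by
          rw [← htfin.encard_eq_coe_toFinset_card]; exact hN y
        exact h1.trans (by exact_mod_cast h2)
      have := aux_rpow_tsum_le _ hp N hfin hcard
      calc (∑' i, c i * (U i).indicator (fun _ => (1:ℝ≥0∞)) y) ^ p * w' y ^ p
          ≤ ((N : ℝ≥0∞) ^ p * ∑' i,
              (c i * (U i).indicator (fun _ => (1:ℝ≥0∞)) y) ^ p) * w' y ^ p :=
            mul_le_mul_left this _
        _ = (N : ℝ≥0∞) ^ p * ((∑' i, c i ^ p * (U i).indicator (fun _ => (1:ℝ≥0∞)) y)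
              * w' y ^ p) := by
            simp_rw [hpt_pow]; rw [mul_assoc]
    calc Int ≤ ∫⁻ y, (N : ℝ≥0∞) ^ p * ((∑' i, c i ^ p
            * (U i).indicator (fun _ => (1:ℝ≥0∞)) y) * w' y ^ p) ∂μ :=
          lintegral_mono hpt
      _ = (N : ℝ≥0∞) ^ p * ∫⁻ y, (∑' i, c i ^ p
            * (U i).indicator (fun _ => (1:ℝ≥0∞)) y) * w' y ^ p ∂μ := by
          refine lintegral_const_mul _ ?_
          exact (Measurable.ennreal_tsum fun i =>
            (measurable_one.indicator (hUmeas i)).const_mul _).mul (hw'm.pow_const p)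
      _ = (N : ℝ≥0∞) ^ p * ∑' i, c i ^ p * J i := by
          simp_rw [hbsum]; rw [hswap]
      _ ≤ (N : ℝ≥0∞) ^ p * S := by
          refine mul_le_mul_right ?_ _
          rw [hSdef]
          refine ENNReal.tsum_le_tsum fun i => ?_
          rw [← halg]
          exact mul_le_mul_right (hJup i) _
  -- lower bound : S ≤ Cm'^p * Int
  have hlo : S ≤ Cm' ^ p * Int := by
    have hpt : ∀ y, (∑' i, c i ^ p * (U i).indicator (fun _ => (1:ℝ≥0∞)) y) * w' y ^ p
        ≤ (∑' i, c i * (U i).indicator (fun _ => (1:ℝ≥0∞)) y) ^ p * w' y ^ p := by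
      intro y
      refine mul_le_mul_left ?_ _
      calc (∑' i, c i ^ p * (U i).indicator (fun _ => (1:ℝ≥0∞)) y)
          = ∑' i, (c i * (U i).indicator (fun _ => (1:ℝ≥0∞)) y) ^ p := by
            simp_rw [hpt_pow]
        _ ≤ (∑' i, c i * (U i).indicator (fun _ => (1:ℝ≥0∞)) y) ^ p :=
            aux_tsum_rpow_le _ hp
    calc S ≤ ∑' i, c i ^ p * (Cm' ^ p * J i) := by
          rw [hSdef]
          refine ENNReal.tsum_le_tsum fun i => ?_
          rw [← halg]
          exact mul_le_mul_right (hJlo i) _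
      _ = Cm' ^ p * ∑' i, c i ^ p * J i := by
          rw [← ENNReal.tsum_mul_left]
          exact tsum_congr fun i => by ring
      _ = Cm' ^ p * ∫⁻ y, (∑' i, c i ^ p
            * (U i).indicator (fun _ => (1:ℝ≥0∞)) y) * w' y ^ p ∂μ := by
          rw [← hswap]; simp_rw [hbsum]
      _ ≤ Cm' ^ p * Int := by
          refine mul_le_mul_right ?_ _
          rw [hIntdef]
          exact lintegral_mono hpt
  constructor
  · -- lower inequality in the goal
    have h1 : S ^ (1/p) ≤ Cm' * Int ^ (1/p) := by
      calc S ^ (1/p) ≤ (Cm' ^ p * Int) ^ (1/p) :=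
            ENNReal.rpow_le_rpow hlo (by positivity)
        _ = (Cm' ^ p) ^ (1/p) * Int ^ (1/p) := ENNReal.mul_rpow_of_nonneg _ _ (by positivity)
        _ = Cm' * Int ^ (1/p) := by
            rw [← ENNReal.rpow_mul, mul_one_div, div_self h0.ne', ENNReal.rpow_one]
    calc (Cm'⁻¹ ⊓ 1) * S ^ (1/p) ≤ Cm'⁻¹ * (Cm' * Int ^ (1/p)) :=
          mul_le_mul' inf_le_left h1
      _ = (Cm'⁻¹ * Cm') * Int ^ (1/p) := (mul_assoc _ _ _).symm
      _ ≤ 1 * Int ^ (1/p) := mul_le_mul_left (ENNReal.inv_mul_le_one _) _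
      _ = Int ^ (1/p) := one_mul _
  · -- upper inequality in the goal
    calc Int ^ (1/p) ≤ ((N : ℝ≥0∞) ^ p * S) ^ (1/p) :=
          ENNReal.rpow_le_rpow hup (by positivity)
      _ = ((N : ℝ≥0∞) ^ p) ^ (1/p) * S ^ (1/p) :=
          ENNReal.mul_rpow_of_nonneg _ _ (by positivity)
      _ = (N : ℝ≥0∞) * S ^ (1/p) := by
          rw [← ENNReal.rpow_mul, mul_one_div, div_self h0.ne', ENNReal.rpow_one]
      _ ≤ ((N : ℝ≥0∞) + 1) * S ^ (1/p) := mul_le_mul_left le_self_add _
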